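/- Let p be a prime and F a field of characteristic p containing F_{p^2}. For any w ∈ F, the polynomial X^p + X - w ∈ F[X] is either irreducible over F or splits into distinct linear factors over F. -/

import Mathlib

open Polynomial
open scoped Classical

section aux

variable (p : ℕ) [hp : Fact p.Prime]
include hp

lemma AS_natDegree {K : Type*} [Field K] (w : K) :
    (X ^ p + X - C w : K[X]).natDegree = p := by
  have hp1 : 1 < p := (Fact.out : p.Prime).one_lt
  compute_degree!
  · simp [show ¬(1 = p) by omega, show p ≠ 0 by omega]
  · omega

lemma AS_monic {K : Type*} [Field K] (w : K) :
    (X ^ p + X - C w : K[X]).Monic := by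
  have hp1 : 1 < p := (Fact.out : p.Prime).one_lt
  monicity!
  simp [show (1:ℕ) ≤ p by omega, show ¬(p ≤ 1) by omega]

omit hp in
lemma AS_sep {K : Type*} [Field K] [CharP K p] (w : K) :
    (X ^ p + X - C w : K[X]).Separable := by
  have : derivative (X ^ p + X - C w : K[X]) = 1 := by
    simp [derivative_X_pow, CharP.cast_eq_zero K p]
  unfold Polynomial.Separable
  rw [this]
  exact isCoprime_one_right

lemma g_natDegree {K : Type*} [Field K] :
    (X ^ p + X : K[X]).natDegree = p := by
  have := AS_natDegree p (0 : K)
  simpa using this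

omit hp in
lemma g_sep {K : Type*} [Field K] [CharP K p] :
    (X ^ p + X : K[X]).Separable := by
  have := AS_sep p (0 : K)
  simpa using this

lemma g_splits_GF :
    (X ^ p + X : (GaloisField p 2)[X]).Splits := by
  have hp1 : 1 < p := (Fact.out : p.Prime).one_lt
  have hq : 1 < p ^ 2 := Nat.one_lt_pow two_ne_zero hp1
  haveI : Fintype (GaloisField p 2) := Fintype.ofFinite _
  have hcard : Fintype.card (GaloisField p 2) = p ^ 2 := by
    rw [← Nat.card_eq_fintype_card]; exact GaloisField.card p 2 two_ne_zero
  have hbigne : (X ^ (p ^ 2) - X : (GaloisField p 2)[X]) ≠ 0 :=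
    FiniteField.X_pow_card_sub_X_ne_zero _ hq
  have hbig : (X ^ (p ^ 2) - X : (GaloisField p 2)[X]).Splits := by
    rw [splits_iff_card_roots, FiniteField.X_pow_card_sub_X_natDegree_eq _ hq, ← hcard,
      FiniteField.roots_X_pow_card_sub_X, ← Finset.card_def, Finset.card_univ]
  have hdvd : (X ^ p + X : (GaloisField p 2)[X]) ∣ (X ^ (p ^ 2) - X) := by
    refine ⟨(X ^ p + X : (GaloisField p 2)[X]) ^ (p - 1) - 1, ?_⟩
    have h1 : (X ^ p + X : (GaloisField p 2)[X]) ^ p = X ^ (p ^ 2) + X ^ p := by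
      rw [add_pow_char, ← pow_mul, ← pow_two]
    have h2 : (X ^ p + X : (GaloisField p 2)[X]) * ((X ^ p + X) ^ (p - 1))
        = (X ^ p + X) ^ p := by
      rw [← pow_succ', Nat.sub_add_cancel hp1.le]
    calc (X ^ (p ^ 2) - X : (GaloisField p 2)[X])
        = (X ^ p + X) ^ p - (X ^ p + X) := by rw [h1]; ring
      _ = (X ^ p + X) * ((X ^ p + X) ^ (p - 1) - 1) := by rw [mul_sub, h2, mul_one]
  exact hbig.of_dvd hbigne hdvd

-- roots of X^p + X over F: p of them, nodup, splits
lemma g_facts (F : Type*) [Field F] [CharP F p] [Algebra (GaloisField p 2) F] :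
    Multiset.card (X ^ p + X : F[X]).roots = p ∧ (X ^ p + X : F[X]).roots.Nodup ∧
      (X ^ p + X : F[X]).Splits := by
  have hsK := g_splits_GF p
  set ι := algebraMap (GaloisField p 2) F
  have hmap : (X ^ p + X : (GaloisField p 2)[X]).map ι = (X ^ p + X : F[X]) := by
    simp
  have hroots : (X ^ p + X : F[X]).roots
      = ((X ^ p + X : (GaloisField p 2)[X]).roots).map ι := by
    rw [← hmap, hsK.roots_map ι]
  have hcardK : Multiset.card (X ^ p + X : (GaloisField p 2)[X]).roots = p :=
    (splits_iff_card_roots.mp hsK).trans (g_natDegree p)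
  have hcard : Multiset.card (X ^ p + X : F[X]).roots = p := by
    rw [hroots, Multiset.card_map, hcardK]
  refine ⟨hcard, nodup_roots (g_sep p), ?_⟩
  rw [splits_iff_card_roots, hcard, g_natDegree p]


-- every root of X^p+X in the algebraic closure comes from F
lemma g_root_descend (F : Type*) [Field F] [CharP F p] [Algebra (GaloisField p 2) F]
    (x : AlgebraicClosure F) (hx : x ^ p + x = 0) :
    x ∈ Set.range (algebraMap F (AlgebraicClosure F)) := by
  obtain ⟨hcard, hnd, hsp⟩ := g_facts p F
  set ι := algebraMap F (AlgebraicClosure F)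
  have hmap : (X ^ p + X : F[X]).map ι = (X ^ p + X : (AlgebraicClosure F)[X]) := by simp
  have hne : (X ^ p + X : (AlgebraicClosure F)[X]) ≠ 0 := by
    intro h
    have := g_natDegree (K := AlgebraicClosure F) p
    rw [h, natDegree_zero] at this
    exact (Fact.out : p.Prime).ne_zero this.symm
  have hxr : x ∈ (X ^ p + X : (AlgebraicClosure F)[X]).roots := by
    rw [mem_roots hne]
    simp [hx]
  rw [← hmap, hsp.roots_map ι] at hxr
  obtain ⟨c, _, rfl⟩ := Multiset.mem_map.mp hxr
  exact ⟨c, rfl⟩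

lemma AS_no_mid_factor (F : Type*) [Field F] [CharP F p] [Algebra (GaloisField p 2) F]
    (w : F) (hn : ¬∃ β : F, eval β (X ^ p + X - C w) = 0)
    (a : F[X]) (ha : a.Monic) (hd : a ∣ (X ^ p + X - C w : F[X]))
    (h1 : 1 ≤ a.natDegree) (h2 : a.natDegree < p) : False := by
  set E := AlgebraicClosure F
  set ι := algebraMap F E with hι
  have hinj : Function.Injective ι := ι.injective
  set f : F[X] := X ^ p + X - C w with hf
  set aE : E[X] := a.map ι with haE
  set fE : E[X] := f.map ι with hfE
  have haEm : aE.Monic := ha.map ι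
  have haEdeg : aE.natDegree = a.natDegree := natDegree_map ι
  have haEne0 : aE.degree ≠ 0 := by
    rw [degree_eq_natDegree haEm.ne_zero, haEdeg]
    exact_mod_cast (by omega : a.natDegree ≠ 0)
  obtain ⟨α, hα⟩ := IsAlgClosed.exists_root aE haEne0
  have hdE : aE ∣ fE := Polynomial.map_dvd ι hd
  have hfEeq : fE = X ^ p + X - C (ι w) := by
    rw [hfE, hf]; simp
  have hfα : α ^ p + α = ι w := by
    have := eval_eq_zero_of_dvd_of_eval_eq_zero hdE hα
    rw [hfEeq] at this
    simp at this
    linear_combination this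
  -- each root r of aE satisfies r - α ∈ range ι
  have hroot_range : ∀ r ∈ aE.roots, r - α ∈ Set.range ι := by
    intro r hr
    have hrev : eval r aE = 0 := (mem_roots haEm.ne_zero).mp hr
    have hfr : r ^ p + r = ι w := by
      have := eval_eq_zero_of_dvd_of_eval_eq_zero hdE hrev
      rw [hfEeq] at this
      simp at this
      linear_combination this
    apply g_root_descend p F
    rw [sub_pow_char]
    linear_combination hfr - hfα
  -- sum of roots
  have hsplitsE : aE.Splits := IsAlgClosed.splits aE
  have hsum : aE.roots.sum = -ι a.nextCoeff := by
    have h := hsplitsE.nextCoeff_eq_neg_sum_roots_of_monic haEm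
    rw [haE, nextCoeff_map hinj] at h
    linear_combination h
  have hcard : Multiset.card aE.roots = a.natDegree := by
    rw [splits_iff_card_roots.mp hsplitsE, haEdeg]
  -- decompose the sum
  have hdecomp : aE.roots.sum
      = (aE.roots.map (fun r => r - α)).sum + (Multiset.card aE.roots) • α := by
    have : aE.roots.map (fun r => (r - α) + α) = aE.roots.map id := by
      apply Multiset.map_congr rfl
      intro r _; simp
    calc aE.roots.sum = (aE.roots.map (fun r => (r - α) + α)).sum := by
          rw [this, Multiset.map_id]
      _ = _ := by
          rw [Multiset.sum_map_add]
          congr 1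
          rw [Multiset.map_const', Multiset.sum_replicate]
  have hsub_mem : (aE.roots.map (fun r => r - α)).sum ∈ (⊥ : Subalgebra F E) := by
    apply Subalgebra.multiset_sum_mem
    intro x hxm
    obtain ⟨r, hr, rfl⟩ := Multiset.mem_map.mp hxm
    rw [Algebra.mem_bot]
    exact hroot_range r hr
  have hαmem : (a.natDegree : E) * α ∈ (⊥ : Subalgebra F E) := by
    have : (a.natDegree : E) * α = aE.roots.sum - (aE.roots.map (fun r => r - α)).sum := by
      rw [hdecomp, hcard]; rw [nsmul_eq_mul]; ring
    rw [this]
    apply Subalgebra.sub_mem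
    · rw [hsum, Algebra.mem_bot]; exact ⟨-a.nextCoeff, by simp [hι]⟩
    · exact hsub_mem
  rw [Algebra.mem_bot] at hαmem
  obtain ⟨y, hy⟩ := hαmem
  have hdF : (a.natDegree : F) ≠ 0 := by
    rw [Ne, CharP.cast_eq_zero_iff F p]
    exact Nat.not_dvd_of_pos_of_lt (by omega) h2
  have hdE0 : (a.natDegree : E) ≠ 0 := by
    intro h
    apply hdF
    apply hinj
    rw [map_natCast, h, map_zero]
  have hα_range : α = ι ((a.natDegree : F)⁻¹ * y) := by
    rw [map_mul, map_inv₀, hy, map_natCast]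
    rw [← mul_assoc, inv_mul_cancel₀ hdE0, one_mul]
  apply hn
  refine ⟨(a.natDegree : F)⁻¹ * y, ?_⟩
  apply hinj
  rw [map_zero]
  have : ι (eval ((a.natDegree : F)⁻¹ * y) f) = eval (ι ((a.natDegree : F)⁻¹ * y)) fE := by
    rw [hfE, eval_map, eval₂_at_apply]
  rw [this, ← hα_range, hfEeq]
  simp
  linear_combination hfα

end aux

/-- Let `F` be a field of characteristic `p` containing `𝔽_{p²}`. For `w ∈ F`, the
polynomial `X^p + X - w` is either irreducible over `F` or splits into `p` distinct
linear factors over `F`. -/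
theorem stmt_3 (p : ℕ) [Fact p.Prime] (F : Type*) [Field F] [CharP F p]
    [Algebra (GaloisField p 2) F] (w : F) :
    Irreducible (X ^ p + X - C w : F[X]) ∨
      ((X ^ p + X - C w : F[X]).Splits ∧
        (X ^ p + X - C w : F[X]).roots.toFinset.card = p) := by
  set f : F[X] := X ^ p + X - C w with hf
  have hfdeg : f.natDegree = p := AS_natDegree p w
  have hp1 : 1 < p := (Fact.out : p.Prime).one_lt
  have hfne : f ≠ 0 := fun h => by rw [h, natDegree_zero] at hfdeg; omega
  by_cases hroot : ∃ β : F, eval β f = 0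
  · right
    obtain ⟨β, hβ⟩ := hroot
    obtain ⟨hgcard, hgnd, _⟩ := g_facts p F
    have hgne : (X ^ p + X : F[X]) ≠ 0 := by
      intro h
      have := g_natDegree (K := F) p
      rw [h, natDegree_zero] at this; omega
    have hβ' : β ^ p + β - w = 0 := by simpa [hf] using hβ
    have hsub : ((X ^ p + X : F[X]).roots.toFinset.image (fun c => β + c))
        ⊆ f.roots.toFinset := by
      intro x hx
      simp only [Finset.mem_image, Multiset.mem_toFinset] at hx ⊢
      obtain ⟨c, hc, rfl⟩ := hx
      have hc0 : c ^ p + c = 0 := by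
        have := (mem_roots hgne).mp hc
        simpa using this
      rw [mem_roots hfne]
      show eval (β + c) f = 0
      rw [hf]
      simp only [eval_sub, eval_add, eval_pow, eval_X, eval_C]
      rw [add_pow_char]
      linear_combination hβ' + hc0
    have himgcard : ((X ^ p + X : F[X]).roots.toFinset.image (fun c => β + c)).card = p := by
      rw [Finset.card_image_of_injective _ (add_right_injective β),
        Multiset.toFinset_card_of_nodup hgnd, hgcard]
    have h1 : p ≤ f.roots.toFinset.card := himgcard ▸ Finset.card_le_card hsub
    have h2 : f.roots.toFinset.card ≤ Multiset.card f.roots := Multiset.toFinset_card_le _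
    have h3 : Multiset.card f.roots ≤ p := hfdeg ▸ f.card_roots'
    have hcard : Multiset.card f.roots = p := le_antisymm h3 (h1.trans h2)
    constructor
    · rw [splits_iff_card_roots, hcard, hfdeg]
    · omega
  · left
    rw [irreducible_iff]
    constructor
    · rw [Polynomial.isUnit_iff_degree_eq_zero, degree_eq_natDegree hfne, hfdeg]
      exact_mod_cast (by omega : p ≠ 0)
    · rintro u v huv
      by_contra hcon
      push_neg at hcon
      obtain ⟨hu, hv⟩ := hcon
      have hune : u ≠ 0 := fun h => hfne (by rw [huv, h, zero_mul])
      have hvne : v ≠ 0 := fun h => hfne (by rw [huv, h, mul_zero])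
      have hdeg : u.natDegree + v.natDegree = p := by
        rw [← natDegree_mul hune hvne, ← huv, hfdeg]
      have hu1 : 1 ≤ u.natDegree := by
        rcases Nat.eq_zero_or_pos u.natDegree with h | h
        · exact absurd (Polynomial.isUnit_iff_degree_eq_zero.mpr
            (by rw [degree_eq_natDegree hune, h]; rfl)) hu
        · omega
      have hv1 : 1 ≤ v.natDegree := by
        rcases Nat.eq_zero_or_pos v.natDegree with h | h
        · exact absurd (Polynomial.isUnit_iff_degree_eq_zero.mpr
            (by rw [degree_eq_natDegree hvne, h]; rfl)) hv
        · omega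
      have hlc : u.leadingCoeff ≠ 0 := leadingCoeff_ne_zero.mpr hune
      set a := u * C u.leadingCoeff⁻¹ with haa
      have ham : a.Monic := monic_mul_leadingCoeff_inv hune
      have hadeg : a.natDegree = u.natDegree := by
        rw [haa, natDegree_mul hune (by simp [hlc]), natDegree_C, add_zero]
      have had : a ∣ f := by
        refine ⟨C u.leadingCoeff * v, ?_⟩
        rw [haa, huv, mul_assoc, ← mul_assoc (C u.leadingCoeff⁻¹), ← C_mul,
          inv_mul_cancel₀ hlc, C_1, one_mul]
      exact AS_no_mid_factor p F w hroot a ham had (hadeg ▸ hu1) (by omega)
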